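/- For every LTL formula Φ in the syntactic class TL_G, there exists a deterministic ω-automaton A over the alphabet 2^V with a safety acceptance condition (given by a set F of states, a run is accepting iff it stays in F at all times) such that A has at most 2^(2^|Φ|) states and A accepts exactly the set of infinite words w with w ⊨ Φ. -/

import Mathlib

/-- LTL formulas over atomic propositions `V`: the constant `true`, variables,
negation, disjunction, next (`X`), and strong until (`SU`). -/
inductive LTL (V : Type) : Type
  | tt : LTL V
  | var : V → LTL V
  | lnot : LTL V → LTL V
  | lor : LTL V → LTL V → LTL V
  | lnext : LTL V → LTL V
  | lsu : LTL V → LTL V → LTL V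

namespace LTL

variable {V : Type}

/-- Semantics: `Sat w φ i` means `w, i ⊨ φ` for an infinite word `w : ℕ → Set V`.
In particular `w, i ⊨ ψ SU φ` iff there is `k ≥ i` with `w, k ⊨ ψ` and
`w, j ⊨ φ` for all `i ≤ j < k`. -/
def Sat (w : ℕ → Set V) : LTL V → ℕ → Prop
  | tt, _ => True
  | var v, i => v ∈ w i
  | lnot φ, i => ¬ Sat w φ i
  | lor φ ψ, i => Sat w φ i ∨ Sat w ψ i
  | lnext φ, i => Sat w φ (i + 1)
  | lsu ψ φ, i => ∃ k, i ≤ k ∧ Sat w ψ k ∧ ∀ j, i ≤ j → j < k → Sat w φ j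

/-- Conjunction, as the abbreviation `¬(¬φ ∨ ¬ψ)`. -/
def land (φ ψ : LTL V) : LTL V := lnot (lor (lnot φ) (lnot ψ))

/-- `F φ := φ SU true`. -/
def lF (φ : LTL V) : LTL V := lsu φ tt

/-- `G φ := ¬ F ¬ φ`. -/
def lG (φ : LTL V) : LTL V := lnot (lF (lnot φ))

/-- Weak until: `ψ U φ := (ψ SU φ) ∨ G φ`. -/
def lwu (ψ φ : LTL V) : LTL V := lor (lsu ψ φ) (lG φ)

/-- Number of nodes of the syntax tree. -/
def size : LTL V → ℕ
  | tt => 1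
  | var _ => 1
  | lnot φ => size φ + 1
  | lor φ ψ => size φ + size ψ + 1
  | lnext φ => size φ + 1
  | lsu ψ φ => size ψ + size φ + 1

mutual
  /-- The syntactic class `TL_G`. -/
  inductive TLG : LTL V → Prop
    | var (v : V) : TLG (LTL.var v)
    | not {φ : LTL V} : TLF φ → TLG (LTL.lnot φ)
    | and {φ ψ : LTL V} : TLG φ → TLG ψ → TLG (LTL.land φ ψ)
    | or {φ ψ : LTL V} : TLG φ → TLG ψ → TLG (LTL.lor φ ψ)
    | next {φ : LTL V} : TLG φ → TLG (LTL.lnext φ)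
    | alw {φ : LTL V} : TLG φ → TLG (LTL.lG φ)
    | wu {ψ φ : LTL V} : TLG ψ → TLG φ → TLG (LTL.lwu ψ φ)
  /-- The syntactic class `TL_F`. -/
  inductive TLF : LTL V → Prop
    | var (v : V) : TLF (LTL.var v)
    | not {φ : LTL V} : TLG φ → TLF (LTL.lnot φ)
    | and {φ ψ : LTL V} : TLF φ → TLF ψ → TLF (LTL.land φ ψ)
    | or {φ ψ : LTL V} : TLF φ → TLF ψ → TLF (LTL.lor φ ψ)
    | next {φ : LTL V} : TLF φ → TLF (LTL.lnext φ)
    | ev {φ : LTL V} : TLF φ → TLF (LTL.lF φ)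
    | su {ψ φ : LTL V} : TLF ψ → TLF φ → TLF (LTL.lsu ψ φ)
end

end LTL

/-- The unique run of a deterministic automaton with transition function `δ`
and initial state `s0` on the infinite word `w`. -/
def detRun {S A : Type} (δ : S → A → S) (s0 : S) (w : ℕ → A) : ℕ → S
  | 0 => s0
  | t + 1 => δ (detRun δ s0 w t) (w t)


open scoped Classical

namespace LTL

variable {V : Type}

/-- Replace `w` from position `n` on by `w'`. -/
def splice (w : ℕ → Set V) (n : ℕ) (w' : ℕ → Set V) : ℕ → Set V :=
  fun i => if i < n then w i else w' (i - n)

lemma splice_shift (w : ℕ → Set V) (n : ℕ) (w' : ℕ → Set V) :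
    (fun i => splice w n w' (n + i)) = w' := by
  funext i
  simp [splice, Nat.add_sub_cancel_left, show ¬ (n + i < n) by omega]

lemma splice_splice {n m : ℕ} (h : n ≤ m) (w w' : ℕ → Set V) :
    splice w m w' = splice w n (fun j => splice w m w' (n + j)) := by
  funext i
  by_cases hi : i < n
  · simp [splice, hi, show i < m by omega]
  · simp only [splice]
    rw [if_neg hi, show n + (i - n) = i by omega]

lemma splice_mono {Q : (ℕ → Set V) → Prop} {w : ℕ → Set V} {n m : ℕ} (hnm : n ≤ m)
    (h : ∀ w', Q (splice w n w')) (w' : ℕ → Set V) : Q (splice w m w') := by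
  rw [splice_splice hnm]; exact h _

lemma Sat_shift (w : ℕ → Set V) (φ : LTL V) (n : ℕ) :
    ∀ k, Sat (fun i => w (n + i)) φ k ↔ Sat w φ (n + k) := by
  induction φ with
  | tt => intro k; simp [Sat]
  | var v => intro k; simp [Sat]
  | lnot φ ih => intro k; simp [Sat, ih]
  | lor φ ψ ih1 ih2 => intro k; simp [Sat, ih1, ih2]
  | lnext φ ih =>
    intro k
    have := ih (k + 1)
    simp only [Sat]
    rw [this, show n + (k + 1) = n + k + 1 by omega]
  | lsu ψ φ ih1 ih2 =>
    intro k
    simp only [Sat]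
    constructor
    · rintro ⟨k', hk', h1, h2⟩
      refine ⟨n + k', by omega, (ih1 k').mp h1, fun j hj1 hj2 => ?_⟩
      have := (ih2 (j - n)).mp (h2 (j - n) (by omega) (by omega))
      rwa [show n + (j - n) = j by omega] at this
    · rintro ⟨k', hk', h1, h2⟩
      refine ⟨k' - n, by omega, ?_, fun j hj1 hj2 => ?_⟩
      · have := (ih1 (k' - n))
        rw [show n + (k' - n) = k' by omega] at this
        exact this.mpr h1
      · exact (ih2 j).mpr (h2 (n + j) (by omega) (by omega))

lemma sat_land (w : ℕ → Set V) (φ ψ : LTL V) (i : ℕ) :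
    Sat w (land φ ψ) i ↔ Sat w φ i ∧ Sat w ψ i := by
  simp [land, Sat]

lemma sat_lG (w : ℕ → Set V) (φ : LTL V) (i : ℕ) :
    Sat w (lG φ) i ↔ ∀ k, i ≤ k → Sat w φ k := by
  simp only [lG, lF, Sat]
  constructor
  · intro h k hk
    by_contra hc
    exact h ⟨k, hk, hc, fun _ _ _ => trivial⟩
  · rintro h ⟨k, hk, h1, _⟩
    exact h1 (h k hk)

lemma sat_lwu (w : ℕ → Set V) (ψ φ : LTL V) (i : ℕ) :
    Sat w (lwu ψ φ) i ↔
      (∃ k, i ≤ k ∧ Sat w ψ k ∧ ∀ j, i ≤ j → j < k → Sat w φ j) ∨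
        (∀ k, i ≤ k → Sat w φ k) := by
  rw [lwu, show Sat w (lor (lsu ψ φ) (lG φ)) i ↔ Sat w (lsu ψ φ) i ∨ Sat w (lG φ) i from Iff.rfl,
    sat_lG]
  exact or_congr_left Iff.rfl


lemma sat_splice_mono {φ : LTL V} {i : ℕ} {w : ℕ → Set V} {n m : ℕ} (hnm : n ≤ m)
    (h : ∀ w', Sat (splice w n w') φ i) (w' : ℕ → Set V) : Sat (splice w m w') φ i :=
  splice_mono (Q := fun u => Sat u φ i) hnm h w'

lemma not_sat_splice_mono {φ : LTL V} {i : ℕ} {w : ℕ → Set V} {n m : ℕ} (hnm : n ≤ m)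
    (h : ∀ w', ¬ Sat (splice w n w') φ i) (w' : ℕ → Set V) : ¬ Sat (splice w m w') φ i :=
  splice_mono (Q := fun u => ¬ Sat u φ i) hnm h w'

/-- Bad-prefix property of `TL_G` formulas. -/
def PG (Φ : LTL V) : Prop :=
  ∀ w i, ¬ Sat w Φ i → ∃ n, ∀ w', ¬ Sat (splice w n w') Φ i

/-- Good-prefix property of `TL_F` formulas. -/
def PF (Φ : LTL V) : Prop :=
  ∀ w i, Sat w Φ i → ∃ n, ∀ w', Sat (splice w n w') Φ i

theorem safetyG {Φ : LTL V} (h : TLG Φ) : PG Φ := by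
  refine TLG.rec (motive_1 := fun φ _ => PG φ) (motive_2 := fun φ _ => PF φ)
    ?var1 ?not1 ?and1 ?or1 ?next1 ?alw1 ?wu1 ?var2 ?not2 ?and2 ?or2 ?next2 ?ev2 ?su2 h
  case var1 =>
    intro v w i hs
    refine ⟨i + 1, fun w' => ?_⟩
    simpa [Sat, splice, show i < i + 1 by omega] using hs
  case var2 =>
    intro v w i hs
    refine ⟨i + 1, fun w' => ?_⟩
    simpa [Sat, splice, show i < i + 1 by omega] using hs
  case not1 =>
    intro φ _ ih w i hs
    simp only [Sat, not_not] at hs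
    obtain ⟨n, hn⟩ := ih w i hs
    exact ⟨n, fun w' => by simp [Sat, hn w']⟩
  case not2 =>
    intro φ _ ih w i hs
    simp only [Sat] at hs
    obtain ⟨n, hn⟩ := ih w i hs
    exact ⟨n, fun w' => hn w'⟩
  case and1 =>
    intro φ ψ _ _ ih1 ih2 w i hs
    rw [sat_land] at hs
    rcases not_and_or.mp hs with h1 | h2
    · obtain ⟨n, hn⟩ := ih1 w i h1
      exact ⟨n, fun w' hc => hn w' ((sat_land _ _ _ _).mp hc).1⟩
    · obtain ⟨n, hn⟩ := ih2 w i h2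
      exact ⟨n, fun w' hc => hn w' ((sat_land _ _ _ _).mp hc).2⟩
  case and2 =>
    intro φ ψ _ _ ih1 ih2 w i hs
    rw [sat_land] at hs
    obtain ⟨n1, hn1⟩ := ih1 w i hs.1
    obtain ⟨n2, hn2⟩ := ih2 w i hs.2
    refine ⟨max n1 n2, fun w' => ?_⟩
    rw [sat_land]
    exact ⟨sat_splice_mono (le_max_left n1 n2) hn1 w',
      sat_splice_mono (le_max_right n1 n2) hn2 w'⟩
  case or1 =>
    intro φ ψ _ _ ih1 ih2 w i hs
    simp only [Sat, not_or] at hs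
    obtain ⟨n1, hn1⟩ := ih1 w i hs.1
    obtain ⟨n2, hn2⟩ := ih2 w i hs.2
    refine ⟨max n1 n2, fun w' => ?_⟩
    simp only [Sat, not_or]
    exact ⟨not_sat_splice_mono (le_max_left n1 n2) hn1 w',
      not_sat_splice_mono (le_max_right n1 n2) hn2 w'⟩
  case or2 =>
    intro φ ψ _ _ ih1 ih2 w i hs
    rcases hs with h1 | h2
    · obtain ⟨n, hn⟩ := ih1 w i h1
      exact ⟨n, fun w' => Or.inl (hn w')⟩
    · obtain ⟨n, hn⟩ := ih2 w i h2
      exact ⟨n, fun w' => Or.inr (hn w')⟩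
  case next1 =>
    intro φ _ ih w i hs
    obtain ⟨n, hn⟩ := ih w (i + 1) hs
    exact ⟨n, fun w' => hn w'⟩
  case next2 =>
    intro φ _ ih w i hs
    obtain ⟨n, hn⟩ := ih w (i + 1) hs
    exact ⟨n, fun w' => hn w'⟩
  case alw1 =>
    intro φ _ ih w i hs
    rw [sat_lG] at hs
    push_neg at hs
    obtain ⟨k, hk, hkφ⟩ := hs
    obtain ⟨n, hn⟩ := ih w k hkφ
    refine ⟨n, fun w' => ?_⟩
    rw [sat_lG]
    push_neg
    exact ⟨k, hk, hn w'⟩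
  case ev2 =>
    intro φ _ ih w i hs
    obtain ⟨k, hk, h1, _⟩ := hs
    obtain ⟨n, hn⟩ := ih w k h1
    exact ⟨n, fun w' => ⟨k, hk, hn w', fun _ _ _ => trivial⟩⟩
  case su2 =>
    intro ψ φ _ _ ih1 ih2 w i hs
    obtain ⟨k, hk, h1, h2⟩ := hs
    obtain ⟨n0, hn0⟩ := ih1 w k h1
    have hch : ∀ j, ∃ n, i ≤ j → j < k → ∀ w', Sat (splice w n w') φ j := by
      intro j
      by_cases hj : i ≤ j ∧ j < k
      · obtain ⟨n, hn⟩ := ih2 w j (h2 j hj.1 hj.2)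
        exact ⟨n, fun _ _ => hn⟩
      · exact ⟨0, fun h1' h2' => absurd ⟨h1', h2'⟩ hj⟩
    choose nj hnj using hch
    set N := max n0 ((Finset.range k).sup nj) with hN
    refine ⟨N, fun w' => ⟨k, hk, sat_splice_mono (le_max_left _ _) hn0 w', fun j hj1 hj2 => ?_⟩⟩
    have hle : nj j ≤ N := le_trans (Finset.le_sup (Finset.mem_range.mpr hj2)) (le_max_right _ _)
    exact sat_splice_mono hle (hnj j hj1 hj2) w'
  case wu1 =>
    intro ψ φ _ _ ih1 ih2 w i hs
    rw [sat_lwu] at hs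
    push_neg at hs
    obtain ⟨hsu, hG⟩ := hs
    obtain ⟨k0, hk0, hk0φ⟩ := hG
    -- minimal k ≥ i with ¬ Sat w φ k
    have hex : ∃ k, i ≤ k ∧ ¬ Sat w φ k := ⟨k0, hk0, hk0φ⟩
    classical
    let k := Nat.find hex
    have hkspec : i ≤ k ∧ ¬ Sat w φ k := Nat.find_spec hex
    have hkmin : ∀ j, j < k → ¬ (i ≤ j ∧ ¬ Sat w φ j) := fun j hj => Nat.find_min hex hj
    have hφbelow : ∀ j, i ≤ j → j < k → Sat w φ j := by
      intro j hj1 hj2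
      by_contra hc
      exact hkmin j hj2 ⟨hj1, hc⟩
    have hψ : ∀ j, i ≤ j → j ≤ k → ¬ Sat w ψ j := by
      intro j hj1 hj2 hc
      obtain ⟨j', hj1', hj2', hj'φ⟩ := hsu j hj1 hc
      exact hj'φ (hφbelow j' hj1' (by omega))
    obtain ⟨n0, hn0⟩ := ih2 w k hkspec.2
    have hch : ∀ j, ∃ n, i ≤ j → j ≤ k → ∀ w', ¬ Sat (splice w n w') ψ j := by
      intro j
      by_cases hj : i ≤ j ∧ j ≤ k
      · obtain ⟨n, hn⟩ := ih1 w j (hψ j hj.1 hj.2)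
        exact ⟨n, fun _ _ => hn⟩
      · exact ⟨0, fun h1' h2' => absurd ⟨h1', h2'⟩ hj⟩
    choose nj hnj using hch
    set N := max n0 ((Finset.range (k + 1)).sup nj) with hN
    refine ⟨N, fun w' => ?_⟩
    rw [sat_lwu]
    push_neg
    have hnotφ : ¬ Sat (splice w N w') φ k := not_sat_splice_mono (le_max_left _ _) hn0 w'
    constructor
    · intro k' hk' h1
      by_cases hkk : k' ≤ k
      · have hle : nj k' ≤ N :=
          le_trans (Finset.le_sup (Finset.mem_range.mpr (by omega))) (le_max_right _ _)
        exact absurd h1 (not_sat_splice_mono hle (hnj k' hk' hkk) w')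
      · exact ⟨k, hkspec.1, by omega, hnotφ⟩
    · exact ⟨k, hkspec.1, hnotφ⟩

/-- Subformula closure. -/
noncomputable def subfs : LTL V → Finset (LTL V)
  | tt => {tt}
  | var v => {var v}
  | lnot φ => insert (lnot φ) (subfs φ)
  | lor φ ψ => insert (lor φ ψ) (subfs φ ∪ subfs ψ)
  | lnext φ => insert (lnext φ) (subfs φ)
  | lsu ψ φ => insert (lsu ψ φ) (subfs ψ ∪ subfs φ)

lemma self_mem_subfs (φ : LTL V) : φ ∈ subfs φ := by
  cases φ <;> simp [subfs]

lemma subfs_card (φ : LTL V) : (subfs φ).card ≤ size φ := by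
  induction φ with
  | tt => simp [subfs, size]
  | var v => simp [subfs, size]
  | lnot φ ih =>
    calc (subfs (lnot φ)).card ≤ (subfs φ).card + 1 := Finset.card_insert_le _ _
    _ ≤ size (lnot φ) := by simp [size]; omega
  | lnext φ ih =>
    calc (subfs (lnext φ)).card ≤ (subfs φ).card + 1 := Finset.card_insert_le _ _
    _ ≤ size (lnext φ) := by simp [size]; omega
  | lor φ ψ ih1 ih2 =>
    calc (subfs (lor φ ψ)).card ≤ (subfs φ ∪ subfs ψ).card + 1 := Finset.card_insert_le _ _
    _ ≤ (subfs φ).card + (subfs ψ).card + 1 := by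
        have := Finset.card_union_le (subfs φ) (subfs ψ); omega
    _ ≤ size (lor φ ψ) := by simp [size]; omega
  | lsu ψ φ ih1 ih2 =>
    calc (subfs (lsu ψ φ)).card ≤ (subfs ψ ∪ subfs φ).card + 1 := Finset.card_insert_le _ _
    _ ≤ (subfs ψ).card + (subfs φ).card + 1 := by
        have := Finset.card_union_le (subfs ψ) (subfs φ); omega
    _ ≤ size (lsu ψ φ) := by simp [size]; omega

lemma subfs_trans : ∀ {χ Φ : LTL V}, χ ∈ subfs Φ → subfs χ ⊆ subfs Φ := by
  intro χ Φ
  induction Φ with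
  | tt => intro h; simp [subfs] at h; subst h; exact Finset.Subset.refl _
  | var v => intro h; simp [subfs] at h; subst h; exact Finset.Subset.refl _
  | lnot φ ih =>
    intro h
    rw [subfs, Finset.mem_insert] at h
    rcases h with h | h
    · subst h; exact Finset.Subset.refl _
    · exact (ih h).trans (by rw [subfs]; exact Finset.subset_insert _ _)
  | lnext φ ih =>
    intro h
    rw [subfs, Finset.mem_insert] at h
    rcases h with h | h
    · subst h; exact Finset.Subset.refl _
    · exact (ih h).trans (by rw [subfs]; exact Finset.subset_insert _ _)
  | lor φ ψ ih1 ih2 =>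
    intro h
    rw [subfs, Finset.mem_insert, Finset.mem_union] at h
    rcases h with h | h | h
    · subst h; exact Finset.Subset.refl _
    · exact (ih1 h).trans ((Finset.subset_union_left).trans (Finset.subset_insert _ _))
    · exact (ih2 h).trans ((Finset.subset_union_right).trans (Finset.subset_insert _ _))
  | lsu ψ φ ih1 ih2 =>
    intro h
    rw [subfs, Finset.mem_insert, Finset.mem_union] at h
    rcases h with h | h | h
    · subst h; exact Finset.Subset.refl _
    · exact (ih1 h).trans ((Finset.subset_union_left).trans (Finset.subset_insert _ _))
    · exact (ih2 h).trans ((Finset.subset_union_right).trans (Finset.subset_insert _ _))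

/-- One-step Boolean update: truth of a formula now from the current letter
and truths of subformulas at the next instant. -/
noncomputable def stepF (σ : Set V) (a : LTL V → Bool) : LTL V → Bool
  | tt => Bool.true
  | var v => decide (v ∈ σ)
  | lnot φ => ! stepF σ a φ
  | lor φ ψ => stepF σ a φ || stepF σ a ψ
  | lnext φ => a φ
  | lsu ψ φ => stepF σ a ψ || (stepF σ a φ && a (lsu ψ φ))

lemma sat_lsu_iff (w : ℕ → Set V) (ψ φ : LTL V) (i : ℕ) :
    Sat w (lsu ψ φ) i ↔ Sat w ψ i ∨ (Sat w φ i ∧ Sat w (lsu ψ φ) (i + 1)) := by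
  constructor
  · rintro ⟨k, hk, h1, h2⟩
    rcases Nat.eq_or_lt_of_le hk with h | h
    · exact Or.inl (h ▸ h1)
    · exact Or.inr ⟨h2 i le_rfl h, k, by omega, h1, fun j hj1 hj2 => h2 j (by omega) hj2⟩
  · rintro (h | ⟨h0, k, hk, h1, h2⟩)
    · exact ⟨i, le_rfl, h, fun j h1 h2 => absurd h1 (by omega)⟩
    · refine ⟨k, by omega, h1, fun j hj1 hj2 => ?_⟩
      rcases Nat.eq_or_lt_of_le hj1 with h | h
      · exact h ▸ h0
      · exact h2 j (by omega) hj2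

lemma stepF_correct {Φ : LTL V} (w : ℕ → Set V) (t : ℕ) (a : LTL V → Bool)
    (ha : ∀ χ ∈ subfs Φ, a χ = decide (Sat w χ (t + 1))) :
    ∀ ψ, ψ ∈ subfs Φ → stepF (w t) a ψ = decide (Sat w ψ t) := by
  intro ψ
  induction ψ with
  | tt => intro _; simp [stepF, Sat]; exact @decide_eq_true _ (_) trivial
  | var v => intro _; simp [stepF, Sat]; congr
  | lnot φ ih =>
    intro h
    have hφ : φ ∈ subfs Φ := subfs_trans h (by simp [subfs, self_mem_subfs])
    rw [stepF, ih hφ]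
    by_cases hS : Sat w φ t <;> simp [Sat, hS]
  | lor φ ψ ih1 ih2 =>
    intro h
    have hφ : φ ∈ subfs Φ := subfs_trans h (by
      rw [subfs]; exact Finset.mem_insert_of_mem (Finset.mem_union_left _ (self_mem_subfs _)))
    have hψ : ψ ∈ subfs Φ := subfs_trans h (by
      rw [subfs]; exact Finset.mem_insert_of_mem (Finset.mem_union_right _ (self_mem_subfs _)))
    rw [stepF, ih1 hφ, ih2 hψ]
    by_cases h1 : Sat w φ t <;> by_cases h2 : Sat w ψ t <;> simp [Sat, h1, h2]
  | lnext φ ih =>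
    intro h
    have hφ : φ ∈ subfs Φ := subfs_trans h (by simp [subfs, self_mem_subfs])
    rw [stepF, ha φ hφ]
    rfl
  | lsu ψ φ ih1 ih2 =>
    intro h
    have hψ : ψ ∈ subfs Φ := subfs_trans h (by
      rw [subfs]; exact Finset.mem_insert_of_mem (Finset.mem_union_left _ (self_mem_subfs _)))
    have hφ : φ ∈ subfs Φ := subfs_trans h (by
      rw [subfs]; exact Finset.mem_insert_of_mem (Finset.mem_union_right _ (self_mem_subfs _)))
    rw [stepF, ih1 hψ, ih2 hφ, ha _ h]
    by_cases h1 : Sat w ψ t <;> by_cases h2 : Sat w φ t <;>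
      by_cases h3 : Sat w (lsu ψ φ) (t + 1) <;>
      simp [h1, h2, h3, sat_lsu_iff w ψ φ t]


noncomputable def extA (Φ : LTL V) (a : {x // x ∈ subfs Φ} → Bool) : LTL V → Bool :=
  fun χ => if h : χ ∈ subfs Φ then a ⟨χ, h⟩ else false

noncomputable def autoδ (Φ : LTL V)
    (B : ({x // x ∈ subfs Φ} → Bool) → Bool) (σ : Set V) :
    ({x // x ∈ subfs Φ} → Bool) → Bool :=
  fun a => B (fun x => stepF σ (extA Φ a) x.val)

noncomputable def autoInit (Φ : LTL V) : ({x // x ∈ subfs Φ} → Bool) → Bool :=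
  fun a => a ⟨Φ, self_mem_subfs Φ⟩

noncomputable def asgn (Φ : LTL V) (w : ℕ → Set V) (t : ℕ) : {x // x ∈ subfs Φ} → Bool :=
  fun x => decide (Sat w x.val t)

lemma auto_invariant (Φ : LTL V) (w : ℕ → Set V) :
    ∀ t, detRun (autoδ Φ) (autoInit Φ) w t (asgn Φ w t) = decide (Sat w Φ 0) := by
  intro t
  induction t with
  | zero => rfl
  | succ t ih =>
    rw [detRun]
    show (detRun (autoδ Φ) (autoInit Φ) w t)
        (fun x => stepF (w t) (extA Φ (asgn Φ w (t + 1))) x.val) = _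
    have heq : (fun x : {x // x ∈ subfs Φ} => stepF (w t) (extA Φ (asgn Φ w (t + 1))) x.val)
        = asgn Φ w t := by
      funext x
      exact stepF_correct w t _ (fun χ hχ => by simp [extA, asgn, hχ]) x.val x.property
    rw [heq, ih]

lemma asgn_shift (Φ : LTL V) (w : ℕ → Set V) (t : ℕ) :
    asgn Φ (fun i => w (t + i)) 0 = asgn Φ w t := by
  funext x
  simp only [asgn]
  have := Sat_shift w x.val t 0
  rw [Nat.add_zero] at this
  exact decide_eq_decide.mpr this


end LTL

lemma detRun_congr {S A : Type} (δ : S → A → S) (s0 : S) {w u : ℕ → A} :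
    ∀ t, (∀ s, s < t → w s = u s) → detRun δ s0 w t = detRun δ s0 u t := by
  intro t
  induction t with
  | zero => intro _; rfl
  | succ t ih =>
    intro h
    rw [detRun, detRun, ih (fun s hs => h s (by omega)), h t (by omega)]


/-- every `TL_G` formula `Φ` is recognized by a deterministic
ω-automaton with a safety acceptance condition and at most `2 ^ 2 ^ |Φ|` states. -/
theorem tlG_deterministic_safety_automaton
    {V : Type} [Fintype V] (Φ : LTL V) (hΦ : LTL.TLG Φ) :
    ∃ (S : Type) (_ : Fintype S) (s0 : S) (δ : S → Set V → S) (F : Set S),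
      Fintype.card S ≤ 2 ^ (2 ^ LTL.size Φ) ∧
      ∀ w : ℕ → Set V, ((∀ t, detRun δ s0 w t ∈ F) ↔ LTL.Sat w Φ 0) := by
  classical
  refine ⟨(({x // x ∈ LTL.subfs Φ} → Bool) → Bool), inferInstance, LTL.autoInit Φ, LTL.autoδ Φ,
    {B | ∃ w' : ℕ → Set V, B (LTL.asgn Φ w' 0) = true}, ?_, ?_⟩
  · have h1 : Fintype.card (({x // x ∈ LTL.subfs Φ} → Bool) → Bool)
        = 2 ^ (2 ^ (LTL.subfs Φ).card) := by
      rw [Fintype.card_fun, Fintype.card_fun, Fintype.card_bool, Fintype.card_coe]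
    rw [h1]
    exact Nat.pow_le_pow_right (by norm_num)
      (Nat.pow_le_pow_right (by norm_num) (LTL.subfs_card Φ))
  · intro w
    constructor
    · intro h
      by_contra hns
      obtain ⟨n, hn⟩ := LTL.safetyG hΦ w 0 hns
      obtain ⟨w', hw'⟩ := h n
      set u := LTL.splice w n w' with hu
      have hpre : detRun (LTL.autoδ Φ) (LTL.autoInit Φ) w n
          = detRun (LTL.autoδ Φ) (LTL.autoInit Φ) u n := by
        refine detRun_congr _ _ n (fun s hs => ?_)
        simp [hu, LTL.splice, hs]
      have hinv := LTL.auto_invariant Φ u n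
      have hshift : (fun i => u (n + i)) = w' := LTL.splice_shift w n w'
      have hasgn : LTL.asgn Φ u n = LTL.asgn Φ w' 0 := by
        rw [← LTL.asgn_shift Φ u n, hshift]
      rw [hasgn, ← hpre, hw'] at hinv
      exact hn w' (of_decide_eq_true hinv.symm)
    · intro hSat t
      refine ⟨fun i => w (t + i), ?_⟩
      rw [LTL.asgn_shift, LTL.auto_invariant]
      exact decide_eq_true hSat
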